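/- Let m⁻ < 0 < m⁺ be the roots of ρ - μm - (σ²/2)m² = 0 with μ > 0 and x̂ = (1/(m⁺ - m⁻)) ln((m⁻)²/(m⁺)²). Define V̂(x) = f(x)/f'(x̂) for 0 ≤ x ≤ x̂ and V̂(x) = x - x̂ + μ/ρ for x ≥ x̂, where f(x) = exp(m⁺x) - exp(m⁻x). Then V̂ is continuously differentiable on (0,∞) with V̂'(x̂) = 1 and V̂(x̂) = μ/ρ. -/

import Mathlib

open Real Set

/-- The value function V̂ built from f(x) = exp(m⁺x) - exp(m⁻x) below the threshold
x̂ and linear above it is C¹ on (0,∞) with V̂'(x̂) = 1 and V̂(x̂) = μ/ρ. -/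
theorem stmt_4 (ρ μ σ mm mp : ℝ) (hρ : 0 < ρ) (hμ : 0 < μ) (hσ : 0 < σ)
    (hmm : mm < 0) (hmp : 0 < mp)
    (hrootm : ρ - μ * mm - σ^2 / 2 * mm^2 = 0)
    (hrootp : ρ - μ * mp - σ^2 / 2 * mp^2 = 0) :
    let f : ℝ → ℝ := fun x => Real.exp (mp * x) - Real.exp (mm * x)
    let xhat : ℝ := (1 / (mp - mm)) * Real.log (mm^2 / mp^2)
    let Vhat : ℝ → ℝ := fun x =>
      if x ≤ xhat then f x / (mp * Real.exp (mp * xhat) - mm * Real.exp (mm * xhat))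
      else x - xhat + μ / ρ
    ContDiffOn ℝ 1 Vhat (Set.Ioi 0) ∧ deriv Vhat xhat = 1 ∧ Vhat xhat = μ / ρ := by
  intro f xhat Vhat
  have hdiff : 0 < mp - mm := by linarith
  set a : ℝ := Real.exp (mp * xhat) with ha
  set b : ℝ := Real.exp (mm * xhat) with hb
  have hapos : 0 < a := Real.exp_pos _
  have hbpos : 0 < b := Real.exp_pos _
  set c : ℝ := mp * a - mm * b with hc
  have hcpos : 0 < c := by nlinarith
  have hcne : c ≠ 0 := ne_of_gt hcpos
  -- key : mp^2 * a = mm^2 * b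
  have hmm0 : mm ≠ 0 := ne_of_lt hmm
  have hmp0 : mp ≠ 0 := ne_of_gt hmp
  have hratio : (0:ℝ) < mm ^ 2 / mp ^ 2 := by
    apply div_pos
    · nlinarith
    · positivity
  have hexp : Real.exp ((mp - mm) * xhat) = mm ^ 2 / mp ^ 2 := by
    have : (mp - mm) * xhat = Real.log (mm ^ 2 / mp ^ 2) := by
      show (mp - mm) * (1 / (mp - mm) * Real.log (mm ^ 2 / mp ^ 2)) = _
      field_simp
    rw [this, Real.exp_log hratio]
  have hkey : mp ^ 2 * a = mm ^ 2 * b := by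
    have h1 : a = b * ((mp - mm) * xhat).exp := by
      rw [ha, hb, ← Real.exp_add]; ring_nf
    rw [h1, hexp]
    field_simp
  -- Vieta-type identity
  have hviet : ρ * (mm + mp) = μ * (mm * mp) := by
    have hne : mp - mm ≠ 0 := ne_of_gt hdiff
    apply mul_left_cancel₀ hne
    linear_combination (mp - mm) * (mm * hrootp + mp * hrootm) - (mm * mp) * (hrootp - hrootm)
  have hval2 : ρ * (a - b) = μ * c := by
    have hsq : (mp:ℝ) ^ 2 ≠ 0 := pow_ne_zero _ hmp0
    apply mul_left_cancel₀ hsq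
    rw [hc]
    linear_combination (ρ - μ * mp) * hkey + ((mm - mp) * b) * hviet
  have hval : f xhat / c = μ / ρ := by
    have : f xhat = a - b := rfl
    rw [this, div_eq_div_iff hcne (ne_of_gt hρ)]
    linarith [hval2]
  have hc1 : (mp * Real.exp (mp * xhat) - mm * Real.exp (mm * xhat)) / c = 1 :=
    div_self hcne
  -- derivatives
  have hf' : ∀ x : ℝ, HasDerivAt f (mp * Real.exp (mp * x) - mm * Real.exp (mm * x)) x := by
    intro x
    have h1 := ((hasDerivAt_id x).const_mul mp).exp
    have h2 := ((hasDerivAt_id x).const_mul mm).exp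
    have h3 := h1.sub h2
    simp only [id_eq] at h3
    refine h3.congr_deriv ?_
    ring
  have hg : ∀ x : ℝ, HasDerivAt (fun y => f y / c)
      ((mp * Real.exp (mp * x) - mm * Real.exp (mm * x)) / c) x :=
    fun x => (hf' x).div_const c
  have hl : ∀ x : ℝ, HasDerivAt (fun y : ℝ => y - xhat + μ / ρ) 1 x := by
    intro x
    simpa using ((hasDerivAt_id x).sub_const xhat).add_const (μ / ρ)
  set D : ℝ → ℝ := fun x =>
    if x ≤ xhat then (mp * Real.exp (mp * x) - mm * Real.exp (mm * x)) / c else 1 with hD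
  have hVeq : ∀ y : ℝ, y ≤ xhat → Vhat y = f y / c := by
    intro y hy; simp only [Vhat, if_pos hy]; rfl
  have hVeq' : ∀ y : ℝ, xhat ≤ y → Vhat y = y - xhat + μ / ρ := by
    intro y hy
    rcases eq_or_lt_of_le hy with h | h
    · simp only [Vhat, ← h, if_pos le_rfl, sub_self, zero_add]
      exact hval
    · simp only [Vhat, if_neg (not_le.mpr h)]
  have hDall : ∀ x : ℝ, HasDerivAt Vhat (D x) x := by
    intro x
    rcases lt_trichotomy x xhat with h | h | h
    · have heq : Vhat =ᶠ[nhds x] fun y => f y / c := by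
        filter_upwards [Iio_mem_nhds h] with y hy
        exact hVeq y (le_of_lt hy)
      have := (hg x).congr_of_eventuallyEq heq
      simpa [hD, if_pos (le_of_lt h)] using this
    · have h1 : HasDerivWithinAt Vhat 1 (Iic xhat) xhat := by
        have h1' := (hg xhat).hasDerivWithinAt (s := Iic xhat)
        rw [hc1] at h1'
        exact h1'.congr (fun y hy => hVeq y hy) (hVeq xhat le_rfl)
      have h2 : HasDerivWithinAt Vhat 1 (Ici xhat) xhat := by
        have h2' := (hl xhat).hasDerivWithinAt (s := Ici xhat)
        exact h2'.congr (fun y hy => hVeq' y hy) (hVeq' xhat le_rfl)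
      have h3 := h1.union h2
      rw [Iic_union_Ici] at h3
      have h4 := h3.hasDerivAt (by simp)
      rw [h]
      simpa [hD, if_pos (le_refl xhat), hc1] using h4
    · have heq : Vhat =ᶠ[nhds x] fun y : ℝ => y - xhat + μ / ρ := by
        filter_upwards [Ioi_mem_nhds h] with y hy
        exact hVeq' y (le_of_lt hy)
      have := (hl x).congr_of_eventuallyEq heq
      simpa [hD, if_neg (not_le.mpr h)] using this
  have hDcont : Continuous D := by
    rw [hD]
    apply Continuous.if_le
    · fun_prop
    · exact continuous_const
    · exact continuous_id
    · exact continuous_const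
    · intro x hx
      subst hx
      exact hc1
  have hderivEq : deriv Vhat = D := funext fun x => (hDall x).deriv
  have hC1 : ContDiff ℝ 1 Vhat := by
    rw [contDiff_one_iff_deriv]
    exact ⟨fun x => (hDall x).differentiableAt, hderivEq ▸ hDcont⟩
  refine ⟨hC1.contDiffOn, ?_, ?_⟩
  · rw [hderivEq]
    simp [hD, hc1]
  · simpa [Vhat, if_pos le_rfl] using hval
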